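/- Assume there exist constants A, B > 0 such that ℳ_{k_1,…,k_n}(Q)/Π_i k_i! ≤ A^{Σk_i} B^{deg Q} for all monomials Q. Then by induction on deg P using the decomposition recursion, there exist A', B' > 0 such that ℳ_{k_1,…,k_n}(P,Q)/Π_i k_i! ≤ A'^{Σk_i} B'^{deg P + deg Q} for all monomials P, Q. Consequently, for |t| small enough the generating function ℳ(P,Q) = Σ_{k} Π_i ((-t_i)^{k_i}/k_i!) ℳ_{k}(P,Q) converges absolutely and there exists R < ∞ with |ℳ(P,Q)| ≤ R^{deg P + deg Q}. -/

import Mathlib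

/-- Words in `m` colors: monomials/stars. -/
abbrev Word (m : ℕ) := List (Fin m)

open Finset

private lemma geom_le_two (k : ℕ) : ∑ x ∈ Finset.Iic k, ((1:ℝ)/2)^x ≤ 2 := by
  have h : Finset.Iic k = Finset.range (k+1) := by ext; simp [Nat.lt_succ_iff]
  rw [h]; exact sum_geometric_two_le _

private lemma geom_le_two' (k : ℕ) : ∑ x ∈ Finset.Iic k, ((1:ℝ)/2)^(k-x) ≤ 2 := by
  have h : Finset.Iic k = Finset.range (k+1) := by ext; simp [Nat.lt_succ_iff]
  have h2 := Finset.sum_range_reflect (fun j => ((1:ℝ)/2)^j) (k+1)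
  simp only [Nat.add_sub_cancel] at h2
  rw [h, h2]; exact sum_geometric_two_le _

private lemma sum_Iic_prod_pi (n : ℕ) (kk : Fin n → ℕ) (f : Fin n → ℕ → ℝ) :
    ∑ p ∈ Finset.Iic kk, ∏ j, f j (p j) = ∏ j, ∑ x ∈ Finset.Iic (kk j), f j x := by
  rw [Finset.prod_univ_sum]
  apply Finset.sum_congr
  · ext p; simp [Fintype.mem_piFinset, Pi.le_def]
  · intros; rfl

private lemma key_bound (m n D : ℕ) (q : Fin n → Word m) (hq : ∀ j, (q j).length ≤ D)
    (M1 : (Fin n → ℕ) → Word m → ℕ) (M2 : (Fin n → ℕ) → Word m → Word m → ℕ)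
    (hrec : ∀ (kk : Fin n → ℕ) (k : Fin m) (P Q : Word m),
      M2 kk (k :: P) Q =
        (∑ p ∈ Finset.Iic kk, ∑ i : Fin P.length,
          if P.get i = k then
            (∏ j, Nat.choose (kk j) (p j)) *
              (M2 p (P.take i.1) Q * M1 (fun j => kk j - p j) (P.drop (i.1 + 1)) +
               M2 p (P.drop (i.1 + 1)) Q * M1 (fun j => kk j - p j) (P.take i.1))
          else 0)
        + (∑ j : Fin n, kk j *
            ∑ i : Fin (q j).length,
              if (q j).get i = k then
                M2 (Function.update kk j (kk j - 1))
                  ((q j).drop (i.1 + 1) ++ (q j).take i.1 ++ P) Q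
              else 0)
        + (∑ i : Fin Q.length,
            if Q.get i = k then M1 kk (Q.drop (i.1 + 1) ++ Q.take i.1 ++ P) else 0))
    (hP1Q : ∀ kk Q, M2 kk [] Q = 0)
    (A B : ℝ) (hA : 0 < A) (hB : 0 < B)
    (hM1 : ∀ (kk : Fin n → ℕ) (Q : Word m),
      (M1 kk Q : ℝ) ≤ (∏ i, (Nat.factorial (kk i) : ℝ)) * A ^ (∑ i, kk i) * B ^ Q.length)
    (A' γ : ℝ) (hγ1 : 1 ≤ γ) (hγB : 2*B ≤ γ) (hγn : 3*2^(n+2) ≤ γ)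
    (hA'A : 2*A ≤ A') (hA'D : 3*n*D*γ^D ≤ A') :
    ∀ N L (kk : Fin n → ℕ) (P Q : Word m), (∑ i, kk i) = N → P.length = L →
      (M2 kk P Q : ℝ) ≤
        (∏ i, (Nat.factorial (kk i) : ℝ)) * A' ^ (∑ i, kk i) * γ ^ (P.length + Q.length) := by
  have pγ : (0:ℝ) < γ := lt_of_lt_of_le one_pos hγ1
  have pA' : (0:ℝ) < A' := lt_of_lt_of_le (by linarith) hA'A
  have hAA' : A ≤ A' := by linarith
  intro N
  induction N using Nat.strong_induction_on with
  | _ N ihN =>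
  intro L
  induction L using Nat.strong_induction_on with
  | _ L ihL =>
  intro kk P Q hN hL
  -- combined induction hypothesis
  have ihm : ∀ (p : Fin n → ℕ) (P' Q' : Word m), (∑ i, p i ≤ N) →
      (∑ i, p i < N ∨ P'.length < L) →
      (M2 p P' Q' : ℝ) ≤
        (∏ i, (Nat.factorial (p i) : ℝ)) * A' ^ (∑ i, p i) * γ ^ (P'.length + Q'.length) := by
    intro p P' Q' hle hor
    rcases lt_or_eq_of_le hle with h | h
    · exact ihN _ h _ p P' Q' rfl rfl
    · rcases hor with h' | h'
      · omega
      · exact ihL _ h' p P' Q' h rfl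
  match P with
  | [] => rw [hP1Q, Nat.cast_zero]; positivity
  | (c :: T) =>
    rw [hrec]
    push_cast
    simp only [List.length_cons]
    rw [hN]
    have hL' : T.length + 1 = L := by simpa using hL
    have pK : (0:ℝ) < ∏ i : Fin n, ((kk i).factorial : ℝ) := by positivity
    set K : ℝ := ∏ i : Fin n, ((kk i).factorial : ℝ) with hKdef
    set RR : ℝ := K * A' ^ N * γ ^ (T.length + 1 + Q.length) with hRR
    have pRR : (0:ℝ) < RR := by rw [hRR]; positivity
    refine le_trans (add_le_add_three ?_ ?_ ?_)
      ((by ring : (1/3)*RR + (1/3)*RR + (1/3)*RR = RR).le)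
    -- ═══════════════ Term 1 ═══════════════
    · set f : Fin n → ℕ → ℝ := fun j x =>
        ((kk j).choose x : ℝ) * (x.factorial : ℝ) * (((kk j) - x).factorial : ℝ)
          * A' ^ x * A ^ (kk j - x) with hf
      set G : ℕ → ℝ := fun i =>
        γ ^ (Q.length + (T.length - 1)) * ((1/2:ℝ) ^ (T.length - 1 - i) + (1/2:ℝ) ^ i)
        with hG
      have hsummand : ∀ p ∈ Finset.Iic kk, ∀ i : Fin T.length,
          (if T.get i = c then
            (∏ j : Fin n, ((kk j).choose (p j) : ℝ)) *
              ((M2 p (List.take (↑i) T) Q : ℝ) *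
                 (M1 (fun j => kk j - p j) (List.drop (↑i + 1) T) : ℝ) +
               (M2 p (List.drop (↑i + 1) T) Q : ℝ) *
                 (M1 (fun j => kk j - p j) (List.take (↑i) T) : ℝ))
          else 0) ≤ (∏ j, f j (p j)) * G i.1 := by
        intro p hp i
        have hfG : (0:ℝ) ≤ (∏ j, f j (p j)) * G i.1 := by
          rw [hf, hG]; positivity
        split
        swap
        · exact hfG
        have hpk : p ≤ kk := Finset.mem_Iic.mp hp
        have hpN : ∑ j, p j ≤ N := by
          rw [← hN]; exact Finset.sum_le_sum (fun j _ => hpk j)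
        have hi : (i:ℕ) < T.length := i.isLt
        have lt1 : (List.take (↑i) T).length = (i:ℕ) := by
          rw [List.length_take]; omega
        have ld1 : (List.drop (↑i + 1) T).length = T.length - 1 - (i:ℕ) := by
          rw [List.length_drop]; omega
        have h2a := ihm p (List.take (↑i) T) Q hpN (Or.inr (by omega))
        rw [lt1] at h2a
        have h2b := ihm p (List.drop (↑i + 1) T) Q hpN (Or.inr (by rw [ld1]; omega))
        rw [ld1] at h2b
        have h1a := hM1 (fun j => kk j - p j) (List.drop (↑i + 1) T)
        rw [ld1] at h1a
        have h1b := hM1 (fun j => kk j - p j) (List.take (↑i) T)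
        rw [lt1] at h1b
        set PA : ℝ := ∏ j : Fin n, ((p j).factorial : ℝ) with hPA
        set PB : ℝ := ∏ j : Fin n, ((kk j - p j).factorial : ℝ) with hPB
        set CP : ℝ := ∏ j : Fin n, ((kk j).choose (p j) : ℝ) with hCP
        set SA : ℕ := ∑ j, p j with hSA
        set SB : ℕ := ∑ j : Fin n, (kk j - p j) with hSB
        set d : ℕ := T.length - 1 - (i:ℕ) with hd
        have pCP : (0:ℝ) ≤ CP := by rw [hCP]; positivity
        have hFeq : (∏ j, f j (p j)) = CP * PA * PB * A' ^ SA * A ^ SB := by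
          rw [hf]
          simp only [Finset.prod_mul_distrib, Finset.prod_pow_eq_pow_sum]
          rfl
        have e1 : (M2 p (List.take (↑i) T) Q : ℝ) *
              (M1 (fun j => kk j - p j) (List.drop (↑i + 1) T) : ℝ)
            ≤ (PA * A' ^ SA * γ ^ ((i:ℕ) + Q.length)) * (PB * A ^ SB * B ^ d) := by
          apply mul_le_mul h2a h1a (by positivity) (by positivity)
        have e2 : (M2 p (List.drop (↑i + 1) T) Q : ℝ) *
              (M1 (fun j => kk j - p j) (List.take (↑i) T) : ℝ)
            ≤ (PA * A' ^ SA * γ ^ (d + Q.length)) * (PB * A ^ SB * B ^ (i:ℕ)) := by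
          apply mul_le_mul h2b h1b (by positivity) (by positivity)
        have key1 : γ ^ ((i:ℕ) + Q.length) * B ^ d
            ≤ γ ^ (Q.length + (T.length - 1)) * (1/2:ℝ) ^ d := by
          have hBd : B ^ d ≤ (γ * (1/2)) ^ d := by
            apply pow_le_pow_left₀ hB.le (by linarith)
          calc γ ^ ((i:ℕ) + Q.length) * B ^ d
              ≤ γ ^ ((i:ℕ) + Q.length) * (γ * (1/2)) ^ d := by
                apply mul_le_mul_of_nonneg_left hBd (by positivity)
            _ = γ ^ ((i:ℕ) + Q.length + d) * (1/2:ℝ) ^ d := by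
                rw [mul_pow, ← mul_assoc, ← pow_add]
            _ = γ ^ (Q.length + (T.length - 1)) * (1/2:ℝ) ^ d := by
                congr 2; omega
        have key2 : γ ^ (d + Q.length) * B ^ (i:ℕ)
            ≤ γ ^ (Q.length + (T.length - 1)) * (1/2:ℝ) ^ (i:ℕ) := by
          have hBd : B ^ (i:ℕ) ≤ (γ * (1/2)) ^ (i:ℕ) := by
            apply pow_le_pow_left₀ hB.le (by linarith)
          calc γ ^ (d + Q.length) * B ^ (i:ℕ)
              ≤ γ ^ (d + Q.length) * (γ * (1/2)) ^ (i:ℕ) := by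
                apply mul_le_mul_of_nonneg_left hBd (by positivity)
            _ = γ ^ (d + Q.length + (i:ℕ)) * (1/2:ℝ) ^ (i:ℕ) := by
                rw [mul_pow, ← mul_assoc, ← pow_add]
            _ = γ ^ (Q.length + (T.length - 1)) * (1/2:ℝ) ^ (i:ℕ) := by
                congr 2; omega
        calc CP * ((M2 p (List.take (↑i) T) Q : ℝ) *
                 (M1 (fun j => kk j - p j) (List.drop (↑i + 1) T) : ℝ) +
               (M2 p (List.drop (↑i + 1) T) Q : ℝ) *
                 (M1 (fun j => kk j - p j) (List.take (↑i) T) : ℝ))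
            ≤ CP * ((PA * A' ^ SA * γ ^ ((i:ℕ) + Q.length)) * (PB * A ^ SB * B ^ d)
                + (PA * A' ^ SA * γ ^ (d + Q.length)) * (PB * A ^ SB * B ^ (i:ℕ))) := by
              apply mul_le_mul_of_nonneg_left (add_le_add e1 e2) pCP
          _ = (CP * PA * PB * A' ^ SA * A ^ SB) *
                (γ ^ ((i:ℕ) + Q.length) * B ^ d + γ ^ (d + Q.length) * B ^ (i:ℕ)) := by
              ring
          _ ≤ (CP * PA * PB * A' ^ SA * A ^ SB) *
                (γ ^ (Q.length + (T.length - 1)) * ((1/2:ℝ) ^ d + (1/2:ℝ) ^ (i:ℕ))) := by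
              apply mul_le_mul_of_nonneg_left _ (by rw [hPA, hPB]; positivity)
              calc γ ^ ((i:ℕ) + Q.length) * B ^ d + γ ^ (d + Q.length) * B ^ (i:ℕ)
                  ≤ γ ^ (Q.length + (T.length - 1)) * (1/2:ℝ) ^ d
                    + γ ^ (Q.length + (T.length - 1)) * (1/2:ℝ) ^ (i:ℕ) :=
                    add_le_add key1 key2
                _ = γ ^ (Q.length + (T.length - 1)) * ((1/2:ℝ) ^ d + (1/2:ℝ) ^ (i:ℕ)) := by
                    ring
          _ = (∏ j, f j (p j)) * G i.1 := by rw [hFeq, hG]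
      refine le_trans (b := ∑ p ∈ Finset.Iic kk,
          (∏ j, f j (p j)) * (∑ i : Fin T.length, G i.1)) ?_ ?_
      · apply Finset.sum_le_sum
        intro p hp
        rw [Finset.mul_sum]
        exact Finset.sum_le_sum fun i _ => hsummand p hp i
      -- now goal: ∑ p ∈ Iic kk, (∏ j, f j (p j)) * (∑ i : Fin T.length, G i.1) ≤ 1/3 * RR
      have hGsum : (∑ i : Fin T.length, G i.1) ≤ 4 * γ ^ (Q.length + (T.length - 1)) := by
        rw [hG]
        rw [Fin.sum_univ_eq_sum_range
          (fun i => γ ^ (Q.length + (T.length - 1)) * ((1/2:ℝ) ^ (T.length - 1 - i) + (1/2:ℝ) ^ i))]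
        rw [← Finset.mul_sum, Finset.sum_add_distrib]
        have r1 : ∑ i ∈ Finset.range T.length, ((1:ℝ)/2) ^ (T.length - 1 - i)
            = ∑ i ∈ Finset.range T.length, ((1:ℝ)/2) ^ i :=
          Finset.sum_range_reflect (fun j => ((1:ℝ)/2)^j) T.length
        have r2 : ∑ i ∈ Finset.range T.length, ((1:ℝ)/2) ^ i ≤ 2 := sum_geometric_two_le _
        calc γ ^ (Q.length + (T.length - 1)) *
              ((∑ i ∈ Finset.range T.length, ((1:ℝ)/2) ^ (T.length - 1 - i))
                + ∑ i ∈ Finset.range T.length, ((1:ℝ)/2) ^ i)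
            ≤ γ ^ (Q.length + (T.length - 1)) * (2 + 2) := by
              apply mul_le_mul_of_nonneg_left _ (by positivity)
              rw [r1]; linarith
          _ = 4 * γ ^ (Q.length + (T.length - 1)) := by ring
      have hFsum : (∑ p ∈ Finset.Iic kk, ∏ j, f j (p j)) ≤ 2 ^ n * K * A' ^ N := by
        rw [sum_Iic_prod_pi]
        have hcol : ∀ j : Fin n, (∑ x ∈ Finset.Iic (kk j), f j x)
            ≤ ((kk j).factorial : ℝ) * (2 * A' ^ (kk j)) := by
          intro j
          have step1 : (∑ x ∈ Finset.Iic (kk j), f j x)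
              ≤ ∑ x ∈ Finset.Iic (kk j),
                  ((kk j).factorial : ℝ) * (A' ^ (kk j) * (1/2:ℝ) ^ (kk j - x)) := by
            apply Finset.sum_le_sum
            intro x hx
            have hxk : x ≤ kk j := Finset.mem_Iic.mp hx
            have hcf : ((kk j).choose x : ℝ) * (x.factorial : ℝ) * ((kk j - x).factorial : ℝ)
                = ((kk j).factorial : ℝ) := by
              rw [← Nat.cast_mul, ← Nat.cast_mul]
              exact_mod_cast congrArg (Nat.cast (R := ℝ))
                (Nat.choose_mul_factorial_mul_factorial hxk)
            rw [hf]
            dsimp only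
            rw [hcf]
            have hAx : A ^ (kk j - x) ≤ (A' * (1/2)) ^ (kk j - x) := by
              apply pow_le_pow_left₀ hA.le (by linarith)
            calc ((kk j).factorial : ℝ) * A' ^ x * A ^ (kk j - x)
                ≤ ((kk j).factorial : ℝ) * A' ^ x * (A' * (1/2)) ^ (kk j - x) := by
                  apply mul_le_mul_of_nonneg_left hAx (by positivity)
              _ = ((kk j).factorial : ℝ) * (A' ^ (x + (kk j - x)) * (1/2:ℝ) ^ (kk j - x)) := by
                  rw [mul_pow, pow_add]; ring
              _ = ((kk j).factorial : ℝ) * (A' ^ (kk j) * (1/2:ℝ) ^ (kk j - x)) := by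
                  congr 3; omega
          calc (∑ x ∈ Finset.Iic (kk j), f j x)
              ≤ ∑ x ∈ Finset.Iic (kk j),
                  ((kk j).factorial : ℝ) * (A' ^ (kk j) * (1/2:ℝ) ^ (kk j - x)) := step1
            _ = ((kk j).factorial : ℝ) * A' ^ (kk j) * ∑ x ∈ Finset.Iic (kk j), (1/2:ℝ) ^ (kk j - x) := by
                rw [Finset.mul_sum]; apply Finset.sum_congr rfl; intros; ring
            _ ≤ ((kk j).factorial : ℝ) * A' ^ (kk j) * 2 := by
                apply mul_le_mul_of_nonneg_left (geom_le_two' (kk j)) (by positivity)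
            _ = ((kk j).factorial : ℝ) * (2 * A' ^ (kk j)) := by ring
        calc (∏ j, ∑ x ∈ Finset.Iic (kk j), f j x)
            ≤ ∏ j, ((kk j).factorial : ℝ) * (2 * A' ^ (kk j)) := by
              apply Finset.prod_le_prod
              · intro j _
                apply Finset.sum_nonneg
                intro x _
                rw [hf]; positivity
              · intro j _; exact hcol j
          _ = 2 ^ n * K * A' ^ N := by
              rw [Finset.prod_mul_distrib, Finset.prod_mul_distrib,
                Finset.prod_const, Finset.prod_pow_eq_pow_sum, hN, hKdef]
              simp [Finset.card_univ]
              ring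
      have hfin : (2 ^ n * K * A' ^ N) * (4 * γ ^ (Q.length + (T.length - 1))) ≤ 1/3 * RR := by
        rw [hRR]
        have hexp : γ ^ (Q.length + (T.length - 1)) * γ ≤ γ ^ (T.length + 1 + Q.length) := by
          rw [← pow_succ]
          exact pow_le_pow_right₀ hγ1 (by omega)
        have h2γ : (2:ℝ) ^ (n+2) ≤ γ / 3 := by
          have : (0:ℝ) < 3 := by norm_num
          linarith
        have hpow : (2:ℝ)^n * 4 = 2 ^ (n+2) := by rw [pow_add]; norm_num
        have hKA : (0:ℝ) < K * A' ^ N := by positivity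
        have hγe : (0:ℝ) < γ ^ (Q.length + (T.length - 1)) := by positivity
        calc (2 ^ n * K * A' ^ N) * (4 * γ ^ (Q.length + (T.length - 1)))
            = (2^n * 4) * (K * A' ^ N) * γ ^ (Q.length + (T.length - 1)) := by ring
          _ = 2 ^ (n+2) * (K * A' ^ N) * γ ^ (Q.length + (T.length - 1)) := by rw [hpow]
          _ ≤ (γ/3) * (K * A' ^ N) * γ ^ (Q.length + (T.length - 1)) := by
              apply mul_le_mul_of_nonneg_right _ hγe.le
              exact mul_le_mul_of_nonneg_right h2γ hKA.le
          _ = 1/3 * (K * A' ^ N * (γ ^ (Q.length + (T.length - 1)) * γ)) := by ring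
          _ ≤ 1/3 * (K * A' ^ N * γ ^ (T.length + 1 + Q.length)) := by
              apply mul_le_mul_of_nonneg_left _ (by norm_num)
              exact mul_le_mul_of_nonneg_left hexp hKA.le
          _ = 1/3 * (K * A' ^ N * γ ^ (T.length + 1 + Q.length)) := rfl
      calc (∑ p ∈ Finset.Iic kk, (∏ j, f j (p j)) * (∑ i : Fin T.length, G i.1))
          = (∑ p ∈ Finset.Iic kk, ∏ j, f j (p j)) * (∑ i : Fin T.length, G i.1) := by
            rw [Finset.sum_mul]
        _ ≤ (2 ^ n * K * A' ^ N) * (4 * γ ^ (Q.length + (T.length - 1))) := by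
            apply mul_le_mul hFsum hGsum _ (by positivity)
            apply Finset.sum_nonneg
            intro i _
            rw [hG]; positivity
        _ ≤ 1/3 * RR := hfin
    -- ═══════════════ Term 2 ═══════════════
    · rcases Nat.eq_zero_or_pos N with hN0 | hNpos
      · have hz : ∀ j : Fin n, kk j = 0 := by
          intro j
          have h0 : ∑ i, kk i = 0 := by omega
          exact Finset.sum_eq_zero_iff.mp h0 j (Finset.mem_univ j)
        refine le_of_eq_of_le (Finset.sum_eq_zero fun x _ => ?_) (by positivity)
        rw [hz x]
        simp
      · have hj : ∀ j : Fin n, (kk j : ℝ) *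
            (∑ i : Fin (List.length (q j)), if List.get (q j) i = c then
              ((M2 (Function.update kk j (kk j - 1))
                (List.drop (↑i + 1) (q j) ++ List.take (↑i) (q j) ++ T) Q : ℝ)) else 0)
            ≤ (D : ℝ) * (K * A' ^ (N-1) * γ ^ (D + T.length + Q.length)) := by
          intro j
          rcases Nat.eq_zero_or_pos (kk j) with h0 | hpos
          · rw [h0]
            simp only [Nat.cast_zero, zero_mul]
            positivity
          · have hupd : ∑ i : Fin n, Function.update kk j (kk j - 1) i = N - 1 := by
              rw [Finset.sum_update_of_mem (Finset.mem_univ j)]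
              have h2 := Finset.sum_eq_sum_sdiff_singleton_add (Finset.mem_univ j) (f := kk)
              omega
            have hKupd : (∏ i : Fin n, ((Function.update kk j (kk j - 1) i).factorial : ℝ))
                = ((kk j - 1).factorial : ℝ) *
                  ∏ i ∈ Finset.univ \ {j}, ((kk i).factorial : ℝ) := by
              rw [Finset.prod_congr rfl
                (fun x _ => Function.apply_update (fun _ y => (y.factorial : ℝ)) kk j (kk j - 1) x)]
              exact Finset.prod_update_of_mem (Finset.mem_univ j) _ _
            have hKrel : (kk j : ℝ) * (((kk j - 1).factorial : ℝ) *
                ∏ i ∈ Finset.univ \ {j}, ((kk i).factorial : ℝ)) = K := by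
              rw [hKdef, ← mul_assoc]
              have h1 : (kk j : ℝ) * ((kk j - 1).factorial : ℝ) = ((kk j).factorial : ℝ) := by
                exact_mod_cast Nat.mul_factorial_pred hpos.ne'
              rw [h1, Finset.sdiff_singleton_eq_erase]
              exact Finset.mul_prod_erase Finset.univ
                (fun i => ((kk i).factorial : ℝ)) (Finset.mem_univ j)
            have hi2 : ∀ i : Fin (List.length (q j)),
                (if List.get (q j) i = c then
                  ((M2 (Function.update kk j (kk j - 1))
                    (List.drop (↑i + 1) (q j) ++ List.take (↑i) (q j) ++ T) Q : ℝ)) else 0)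
                ≤ (((kk j - 1).factorial : ℝ) * ∏ i ∈ Finset.univ \ {j}, ((kk i).factorial : ℝ))
                    * A' ^ (N-1) * γ ^ (D + T.length + Q.length) := by
              intro i
              split
              swap
              · positivity
              have hlen : (List.drop (↑i + 1) (q j) ++ List.take (↑i) (q j) ++ T).length
                  ≤ D + T.length := by
                have h1 := hq j
                have h2 := i.isLt
                simp only [List.length_append, List.length_take, List.length_drop]
                omega
              have h := ihm (Function.update kk j (kk j - 1))
                (List.drop (↑i + 1) (q j) ++ List.take (↑i) (q j) ++ T) Q
                (by rw [hupd]; omega) (Or.inl (by rw [hupd]; omega))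
              rw [hupd, hKupd] at h
              refine h.trans ?_
              apply mul_le_mul_of_nonneg_left (pow_le_pow_right₀ hγ1 (by omega)) (by positivity)
            calc (kk j : ℝ) *
                (∑ i : Fin (List.length (q j)), if List.get (q j) i = c then
                  ((M2 (Function.update kk j (kk j - 1))
                    (List.drop (↑i + 1) (q j) ++ List.take (↑i) (q j) ++ T) Q : ℝ)) else 0)
                ≤ (kk j : ℝ) * ∑ _i : Fin (List.length (q j)),
                    (((kk j - 1).factorial : ℝ) * ∏ i ∈ Finset.univ \ {j}, ((kk i).factorial : ℝ))
                      * A' ^ (N-1) * γ ^ (D + T.length + Q.length) := by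
                  apply mul_le_mul_of_nonneg_left (Finset.sum_le_sum fun i _ => hi2 i)
                    (Nat.cast_nonneg _)
              _ = ((List.length (q j) : ℝ)) * ((kk j : ℝ) * (((kk j - 1).factorial : ℝ) *
                    ∏ i ∈ Finset.univ \ {j}, ((kk i).factorial : ℝ)) * A' ^ (N-1)
                      * γ ^ (D + T.length + Q.length)) := by
                  rw [Finset.sum_const, Finset.card_univ, Fintype.card_fin, nsmul_eq_mul]
                  ring
              _ = ((List.length (q j) : ℝ)) * (K * A' ^ (N-1) * γ ^ (D + T.length + Q.length)) := by
                  rw [hKrel]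
              _ ≤ (D : ℝ) * (K * A' ^ (N-1) * γ ^ (D + T.length + Q.length)) := by
                  apply mul_le_mul_of_nonneg_right _ (by positivity)
                  exact_mod_cast hq j
        refine le_trans (Finset.sum_le_sum fun j _ => hj j) ?_
        rw [Finset.sum_const, Finset.card_univ, Fintype.card_fin, nsmul_eq_mul]
        rw [hRR]
        have hA'N : A' ^ (N-1) * A' = A' ^ N := by
          rw [← pow_succ]
          congr 1
          omega
        have hγsplit : γ ^ (D + T.length + Q.length)
            = γ ^ D * γ ^ (T.length + Q.length) := by
          rw [← pow_add]
          congr 1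
          omega
        calc (n : ℝ) * ((D : ℝ) * (K * A' ^ (N-1) * γ ^ (D + T.length + Q.length)))
            = ((n : ℝ) * (D : ℝ) * γ ^ D) * (K * A' ^ (N-1) * γ ^ (T.length + Q.length)) := by
              rw [hγsplit]; ring
          _ ≤ (A' / 3) * (K * A' ^ (N-1) * γ ^ (T.length + Q.length)) := by
              apply mul_le_mul_of_nonneg_right _ (by positivity)
              linarith
          _ = 1/3 * (K * (A' ^ (N-1) * A') * γ ^ (T.length + Q.length)) := by ring
          _ = 1/3 * (K * A' ^ N * γ ^ (T.length + Q.length)) := by rw [hA'N]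
          _ ≤ 1/3 * (K * A' ^ N * γ ^ (T.length + 1 + Q.length)) := by
              apply mul_le_mul_of_nonneg_left _ (by norm_num)
              apply mul_le_mul_of_nonneg_left (pow_le_pow_right₀ hγ1 (by omega)) (by positivity)
    -- ═══════════════ Term 3 ═══════════════
    · have hi3 : ∀ i : Fin (List.length Q),
          (if Q.get i = c then (M1 kk (List.drop (↑i + 1) Q ++ List.take (↑i) Q ++ T) : ℝ) else 0)
          ≤ K * A ^ N * B ^ (Q.length + T.length - 1) := by
        intro i
        split
        swap
        · positivity
        have h := hM1 kk (List.drop (↑i + 1) Q ++ List.take (↑i) Q ++ T)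
        have hlen : (List.drop (↑i + 1) Q ++ List.take (↑i) Q ++ T).length
            = Q.length + T.length - 1 := by
          have h2 := i.isLt
          simp only [List.length_append, List.length_take, List.length_drop]
          omega
        rw [hlen, hN, ← hKdef] at h
        exact h
      refine le_trans (Finset.sum_le_sum fun i _ => hi3 i) ?_
      rw [Finset.sum_const, Finset.card_univ, Fintype.card_fin, nsmul_eq_mul]
      have hQ2 : (Q.length : ℝ) ≤ 2 * 2 ^ (Q.length + T.length - 1) := by
        have h1 : (Q.length : ℝ) ≤ 2 ^ Q.length := by
          exact_mod_cast (Nat.lt_two_pow_self (n := Q.length)).le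
        have h2 : (2:ℝ) ^ Q.length ≤ 2 ^ (Q.length + T.length - 1 + 1) :=
          pow_le_pow_right₀ one_le_two (by omega)
        calc (Q.length : ℝ) ≤ 2 ^ Q.length := h1
          _ ≤ 2 ^ (Q.length + T.length - 1 + 1) := h2
          _ = 2 * 2 ^ (Q.length + T.length - 1) := by rw [pow_succ]; ring
      have hγ12 : (2:ℝ) ≤ γ / 3 := by
        have h4 : (4:ℝ) ≤ 2 ^ (n+2) := by
          calc (4:ℝ) = 2 ^ 2 := by norm_num
            _ ≤ 2 ^ (n+2) := pow_le_pow_right₀ one_le_two (by omega)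
        linarith
      calc (Q.length : ℝ) * (K * A ^ N * B ^ (Q.length + T.length - 1))
          ≤ (2 * 2 ^ (Q.length + T.length - 1)) * (K * A ^ N * B ^ (Q.length + T.length - 1)) := by
            apply mul_le_mul_of_nonneg_right hQ2 (by positivity)
        _ = 2 * (K * A ^ N) * (2 * B) ^ (Q.length + T.length - 1) := by
            rw [mul_pow]; ring
        _ ≤ 2 * (K * A ^ N) * γ ^ (Q.length + T.length - 1) := by
            apply mul_le_mul_of_nonneg_left
              (pow_le_pow_left₀ (by positivity) hγB _) (by positivity)
        _ ≤ (γ / 3) * (K * A ^ N) * γ ^ (Q.length + T.length - 1) := by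
            apply mul_le_mul_of_nonneg_right
              (mul_le_mul_of_nonneg_right hγ12 (by positivity)) (by positivity)
        _ = 1/3 * ((K * A ^ N) * (γ ^ (Q.length + T.length - 1) * γ)) := by ring
        _ ≤ 1/3 * ((K * A' ^ N) * γ ^ (T.length + 1 + Q.length)) := by
            apply mul_le_mul_of_nonneg_left _ (by norm_num)
            apply mul_le_mul
            · exact mul_le_mul_of_nonneg_left (pow_le_pow_left₀ hA.le hAA' N) pK.le
            · rw [← pow_succ]
              apply pow_le_pow_right₀ hγ1
              omega
            · positivity
            · positivity
        _ = 1/3 * RR := by rw [hRR]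

/-- if the planar two-point map counts `M2` satisfy the decomposition
recursion (with one-point counts `M1` counting planar maps with `kk i` stars of
type `q i` of degree `≤ D` and one star of type `P`), the convention
`ℳ_k(P,1) = 0 = ℳ_k(1,Q)`, and `M1` satisfies a bound
`M1_k(Q) ≤ Πk_i! · A^{Σk_i} B^{deg Q}`, then `M2` satisfies a bound of the same
form, and for `|t|` small enough the generating function
`ℳ(P,Q) = Σ_k Π((-t_i)^{k_i}/k_i!) ℳ_k(P,Q)` converges absolutely with
`|ℳ(P,Q)| ≤ R^{deg P + deg Q}` for some finite `R`. -/
theorem two_point_generating_function_bound (m n D : ℕ)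
    (q : Fin n → Word m) (hq : ∀ j, (q j).length ≤ D)
    (M1 : (Fin n → ℕ) → Word m → ℕ) (M2 : (Fin n → ℕ) → Word m → Word m → ℕ)
    (hrec : ∀ (kk : Fin n → ℕ) (k : Fin m) (P Q : Word m),
      M2 kk (k :: P) Q =
        (∑ p ∈ Finset.Iic kk, ∑ i : Fin P.length,
          if P.get i = k then
            (∏ j, Nat.choose (kk j) (p j)) *
              (M2 p (P.take i.1) Q * M1 (fun j => kk j - p j) (P.drop (i.1 + 1)) +
               M2 p (P.drop (i.1 + 1)) Q * M1 (fun j => kk j - p j) (P.take i.1))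
          else 0)
        + (∑ j : Fin n, kk j *
            ∑ i : Fin (q j).length,
              if (q j).get i = k then
                M2 (Function.update kk j (kk j - 1))
                  ((q j).drop (i.1 + 1) ++ (q j).take i.1 ++ P) Q
              else 0)
        + (∑ i : Fin Q.length,
            if Q.get i = k then M1 kk (Q.drop (i.1 + 1) ++ Q.take i.1 ++ P) else 0))
    (hPQ1 : ∀ kk P, M2 kk P [] = 0)
    (hP1Q : ∀ kk Q, M2 kk [] Q = 0)
    (A B : ℝ) (hA : 0 < A) (hB : 0 < B)
    (hM1 : ∀ (kk : Fin n → ℕ) (Q : Word m),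
      (M1 kk Q : ℝ) ≤ (∏ i, (Nat.factorial (kk i) : ℝ)) * A ^ (∑ i, kk i) * B ^ Q.length) :
    (∃ A' B' : ℝ, 0 < A' ∧ 0 < B' ∧ ∀ (kk : Fin n → ℕ) (P Q : Word m),
        (M2 kk P Q : ℝ) ≤
          (∏ i, (Nat.factorial (kk i) : ℝ)) * A' ^ (∑ i, kk i) * B' ^ (P.length + Q.length))
    ∧ ∃ η R : ℝ, 0 < η ∧ 0 < R ∧ ∀ t : Fin n → ℂ, (∀ i, ‖t i‖ ≤ η) →
        ∀ P Q : Word m,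
          Summable (fun kk : Fin n → ℕ =>
            (∏ i, (-t i) ^ (kk i) / (Nat.factorial (kk i) : ℂ)) * (M2 kk P Q : ℂ)) ∧
          ‖(∑' kk : Fin n → ℕ,
              (∏ i, (-t i) ^ (kk i) / (Nat.factorial (kk i) : ℂ)) * (M2 kk P Q : ℂ))‖ ≤
            R ^ (P.length + Q.length) := by
  have p2 : (0:ℝ) < 2 ^ (n+2) := by positivity
  set γ : ℝ := 2*B + 3*2^(n+2) + 1 with hγdef
  have pγ : 0 < γ := by positivity
  have hγ1 : 1 ≤ γ := by rw [hγdef]; nlinarith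
  have hγB : 2*B ≤ γ := by rw [hγdef]; nlinarith
  have hγn : 3*2^(n+2) ≤ γ := by rw [hγdef]; nlinarith
  have pnD : (0:ℝ) ≤ 3*(n:ℝ)*(D:ℝ)*γ^D := by positivity
  set A' : ℝ := 2*A + 3*(n:ℝ)*(D:ℝ)*γ^D with hA'def
  have pA' : 0 < A' := by positivity
  have hA'A : 2*A ≤ A' := by rw [hA'def]; nlinarith
  have hA'D : 3*(n:ℝ)*(D:ℝ)*γ^D ≤ A' := by rw [hA'def]; nlinarith
  have bound : ∀ (kk : Fin n → ℕ) (P Q : Word m),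
      (M2 kk P Q : ℝ) ≤
        (∏ i, (Nat.factorial (kk i) : ℝ)) * A' ^ (∑ i, kk i) * γ ^ (P.length + Q.length) :=
    fun kk P Q => key_bound m n D q hq M1 M2 hrec hP1Q A B hA hB hM1 A' γ
      hγ1 hγB hγn hA'A hA'D _ _ kk P Q rfl rfl
  constructor
  · exact ⟨A', γ, pA', pγ, bound⟩
  · refine ⟨(2*A')⁻¹, 2^n*γ, by positivity, by positivity, ?_⟩
    intro t ht P Q
    set η : ℝ := (2*A')⁻¹ with hηdef
    have hhalf : η * A' = 1/2 := by
      rw [hηdef]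
      field_simp
    by_cases hP : P = []
    · subst hP
      have hf0 : (fun kk : Fin n → ℕ =>
          (∏ i, (-t i) ^ (kk i) / (Nat.factorial (kk i) : ℂ)) * (M2 kk [] Q : ℂ))
          = fun _ => 0 := by
        funext kk
        rw [hP1Q]
        simp
      rw [hf0]
      refine ⟨summable_zero, ?_⟩
      rw [tsum_zero]
      simp only [norm_zero]
      positivity
    · have hd1 : 1 ≤ P.length + Q.length := by
        have := List.length_pos_iff.mpr hP
        omega
      set d : ℕ := P.length + Q.length with hd
      set g : (Fin n → ℕ) → ℝ := fun kk => γ^d * ∏ i, (1/2:ℝ)^(kk i) with hg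
      have hgnn : ∀ kk, 0 ≤ g kk := by intro kk; rw [hg]; positivity
      have hnormle : ∀ kk : Fin n → ℕ,
          ‖(∏ i, (-t i) ^ (kk i) / (Nat.factorial (kk i) : ℂ)) * (M2 kk P Q : ℂ)‖ ≤ g kk := by
        intro kk
        rw [norm_mul, norm_prod]
        have e0 : ∀ i : Fin n,
            ‖(-t i) ^ (kk i) / ((kk i).factorial : ℂ)‖ ≤ η ^ (kk i) / ((kk i).factorial : ℝ) := by
          intro i
          rw [norm_div, norm_pow, norm_neg, Complex.norm_natCast]
          have hti : ‖t i‖ ≤ η := by exact ht i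
          gcongr
        have e1 : ‖((M2 kk P Q : ℕ) : ℂ)‖ = ((M2 kk P Q : ℕ) : ℝ) := Complex.norm_natCast _
        calc (∏ i, ‖(-t i) ^ (kk i) / ((kk i).factorial : ℂ)‖) * ‖((M2 kk P Q : ℕ) : ℂ)‖
            ≤ (∏ i, η ^ (kk i) / ((kk i).factorial : ℝ)) *
              ((∏ i, ((kk i).factorial : ℝ)) * A' ^ (∑ i, kk i) * γ ^ d) := by
              apply mul_le_mul
                (Finset.prod_le_prod (fun i _ => norm_nonneg _) (fun i _ => e0 i))
                (by rw [e1]; exact bound kk P Q) (norm_nonneg _) (by positivity)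
          _ = γ ^ d * ∏ i, (η ^ (kk i) / ((kk i).factorial : ℝ) * ((kk i).factorial : ℝ)
                * A' ^ (kk i)) := by
              rw [← Finset.prod_pow_eq_pow_sum, Finset.prod_mul_distrib,
                Finset.prod_mul_distrib]
              ring
          _ = γ ^ d * ∏ i, (1/2:ℝ) ^ (kk i) := by
              congr 1
              apply Finset.prod_congr rfl
              intro i _
              have hfne : ((kk i).factorial : ℝ) ≠ 0 := by positivity
              rw [div_mul_cancel₀ _ hfne, ← mul_pow, hhalf]
          _ = g kk := by rw [hg]
      have hsum_partial : ∀ u : Finset (Fin n → ℕ), ∑ kk ∈ u, g kk ≤ γ^d * 2^n := by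
        intro u
        set KK : Fin n → ℕ := fun j => u.sup (fun kk => kk j) with hKK
        have hsub : u ⊆ Finset.Iic KK := by
          intro kk hk
          exact Finset.mem_Iic.mpr (fun j => Finset.le_sup (f := fun kk => kk j) hk)
        calc ∑ kk ∈ u, g kk = γ^d * ∑ kk ∈ u, ∏ i, (1/2:ℝ)^(kk i) := by
              rw [Finset.mul_sum]
          _ ≤ γ^d * ∑ kk ∈ Finset.Iic KK, ∏ i, (1/2:ℝ)^(kk i) := by
              apply mul_le_mul_of_nonneg_left
                (Finset.sum_le_sum_of_subset_of_nonneg hsub (fun _ _ _ => by positivity))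
                (by positivity)
          _ = γ^d * ∏ j, ∑ x ∈ Finset.Iic (KK j), (1/2:ℝ)^x := by
              rw [sum_Iic_prod_pi n KK (fun _ x => (1/2:ℝ)^x)]
          _ ≤ γ^d * ∏ _j : Fin n, (2:ℝ) := by
              apply mul_le_mul_of_nonneg_left _ (by positivity)
              apply Finset.prod_le_prod
              · intro j _
                apply Finset.sum_nonneg
                intro x _
                positivity
              · intro j _
                exact geom_le_two (KK j)
          _ = γ^d * 2^n := by
              rw [Finset.prod_const, Finset.card_univ, Fintype.card_fin]
      have hgsum : Summable g := summable_of_sum_le hgnn hsum_partial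
      have hfsum : Summable (fun kk : Fin n → ℕ =>
          (∏ i, (-t i) ^ (kk i) / (Nat.factorial (kk i) : ℂ)) * (M2 kk P Q : ℂ)) :=
        Summable.of_norm_bounded hgsum hnormle
      refine ⟨hfsum, ?_⟩
      have hnorm : Summable (fun kk : Fin n → ℕ =>
          ‖(∏ i, (-t i) ^ (kk i) / (Nat.factorial (kk i) : ℂ)) * (M2 kk P Q : ℂ)‖) :=
        Summable.of_nonneg_of_le (fun _ => norm_nonneg _) hnormle hgsum
      calc ‖(∑' kk : Fin n → ℕ,
              (∏ i, (-t i) ^ (kk i) / (Nat.factorial (kk i) : ℂ)) * (M2 kk P Q : ℂ))‖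
          = ‖∑' kk : Fin n → ℕ,
              (∏ i, (-t i) ^ (kk i) / (Nat.factorial (kk i) : ℂ)) * (M2 kk P Q : ℂ)‖ :=
            rfl
        _ ≤ ∑' kk : Fin n → ℕ,
              ‖(∏ i, (-t i) ^ (kk i) / (Nat.factorial (kk i) : ℂ)) * (M2 kk P Q : ℂ)‖ :=
            norm_tsum_le_tsum_norm hnorm
        _ ≤ γ^d * 2^n := by
            apply Summable.tsum_le_of_sum_le hnorm
            intro u
            exact le_trans (Finset.sum_le_sum fun kk _ => hnormle kk) (hsum_partial u)
        _ ≤ (2^n*γ)^d := by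
            rw [mul_pow]
            have h1 : (2:ℝ)^n ≤ ((2:ℝ)^n)^d := le_self_pow₀ (one_le_pow₀ one_le_two) (by omega)
            calc γ^d * 2^n ≤ γ^d * ((2:ℝ)^n)^d := by
                  apply mul_le_mul_of_nonneg_left h1 (by positivity)
              _ = ((2:ℝ)^n)^d * γ^d := by ring
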